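/- Let (C, J) be a small site such that the Grothendieck topos Sh(C,J) of Type-valued sheaves is locally connected, with Π₀ the left adjoint of the constant sheaf functor Δ : Type → Sh(C,J). If E is an object of Sh(C,J) isomorphic to a coproduct ∐_{i∈I} U_i in which every U_i is connected, then Π₀(E) is in bijection with the index set I. -/

import Mathlib

open CategoryTheory CategoryTheory.Limits Opposite

universe u

/-- An object `E` of a category with binary coproducts is *connected* if whenever
`E` is isomorphic to a coproduct `U ⨿ V`, exactly one of `U` and `V` is not an
initial object. -/
def IsConnectedObject {D : Type*} [Category D] [HasBinaryCoproducts D] (E : D) : Prop :=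
  ∀ (U V : D), (E ≅ U ⨿ V) →
    Xor' (¬ Nonempty (IsInitial U)) (¬ Nonempty (IsInitial V))

instance sheafTypeHasColimits {C : Type u} [SmallCategory C] (J : GrothendieckTopology C) :
    HasColimits (Sheaf J (Type u)) :=
  Sheaf.instHasColimitsOfSize

section Aux

universe v w

/-- A connected object is not initial. -/
lemma IsConnectedObject.not_initial {D : Type*} [Category D] [HasBinaryCoproducts D]
    {V : D} (hV : IsConnectedObject V) : ¬ Nonempty (IsInitial V) := by
  rintro ⟨h⟩
  have e : V ≅ V ⨿ V :=
    { hom := coprod.inl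
      inv := coprod.desc (𝟙 V) (h.to V)
      hom_inv_id := coprod.inl_desc _ _
      inv_hom_id := by
        apply coprod.hom_ext
        · rw [coprod.inl_desc_assoc, Category.id_comp, Category.comp_id]
        · simpa using h.hom_ext _ _ }
  rcases hV V V e with ⟨hA, hnA⟩ | ⟨hA, hnA⟩ <;> exact hnA hA

variable {C : Type u} [SmallCategory C] (J : GrothendieckTopology C)

/-- The constant sheaf functor preserves colimits. -/
lemma constantSheaf_preservesColimits :
    PreservesColimitsOfSize.{v, w} (constantSheaf J (Type u)) := by
  haveI h1 : PreservesColimitsOfSize.{v, w} (Functor.const Cᵒᵖ : Type u ⥤ (Cᵒᵖ ⥤ Type u)) :=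
    constLimAdj.leftAdjoint_preservesColimits
  haveI h2 : PreservesColimitsOfSize.{v, w} (presheafToSheaf J (Type u)) :=
    (sheafificationAdjunction J (Type u)).leftAdjoint_preservesColimits
  exact comp_preservesColimits _ _

/-- `Π₀` of a connected object is a singleton. -/
lemma pi0_connected_unique {Pi0 : Sheaf J (Type u) ⥤ Type u}
    (adj : Pi0 ⊣ constantSheaf J (Type u)) {V : Sheaf J (Type u)}
    (hV : IsConnectedObject V) : Nonempty (Pi0.obj V ≃ PUnit.{u + 1}) := by
  classical
  haveI hD0 : PreservesColimitsOfSize.{0, 0} (constantSheaf J (Type u)) :=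
    constantSheaf_preservesColimits J
  set Δ := constantSheaf J (Type u) with hΔdef
  -- Nonemptiness of `Π₀ V`.
  have hne : Nonempty (Pi0.obj V) := by
    by_contra hemp
    have hempty : IsEmpty (Pi0.obj V) := not_nonempty_iff.mp hemp
    let f : V ⟶ Δ.obj (PEmpty.{u + 1}) := adj.homEquiv _ _ (TypeCat.ofHom (fun a => hempty.elim a))
    have hinit : IsInitial (Δ.obj (PEmpty.{u + 1})) :=
      IsInitial.isInitialObj Δ _ Types.isInitialPunit
    haveI := hinit.isIso_to f
    exact hV.not_initial ⟨hinit.ofIso (asIso f).symm⟩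
  -- Subsingletonness of `Π₀ V`.
  have hsub : ∀ x y : Pi0.obj V, x = y := by
    intro x y
    by_contra hxy
    set S : Type u := (PUnit.{u + 1} ⨿ PUnit.{u + 1} : Type u) with hSdef
    have hne' : (coprod.inl : PUnit.{u + 1} ⟶ S) PUnit.unit ≠
        (coprod.inr : PUnit.{u + 1} ⟶ S) PUnit.unit := by
      intro hEq
      have h1 := ConcreteCategory.congr_hom (Types.binaryCoproductIso_inl_comp_hom PUnit.{u+1} PUnit.{u+1})
        PUnit.unit
      have h2 := ConcreteCategory.congr_hom (Types.binaryCoproductIso_inr_comp_hom PUnit.{u+1} PUnit.{u+1})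
        PUnit.unit
      simp only [types_comp_apply] at h1 h2
      rw [hEq] at h1
      rw [h1] at h2
      exact Sum.inl_ne_inr (show (Sum.inl PUnit.unit : PUnit.{u+1} ⊕ PUnit.{u+1}) = Sum.inr PUnit.unit from h2)
    set χ : Pi0.obj V ⟶ S :=
      TypeCat.ofHom (fun p => if p = x then (coprod.inl : PUnit.{u+1} ⟶ S) PUnit.unit
        else (coprod.inr : PUnit.{u+1} ⟶ S) PUnit.unit) with hχdef
    set A := Δ.obj PUnit.{u + 1} with hAdef
    set w : A ⨿ A ≅ Δ.obj S := PreservesColimitPair.iso Δ PUnit.{u+1} PUnit.{u+1} with hwdef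
    obtain ⟨f, hfdef⟩ : ∃ f : V ⟶ Δ.obj S, f = adj.homEquiv _ _ χ := ⟨_, rfl⟩
    obtain ⟨g, hgdef⟩ : ∃ g : V ⟶ A ⨿ A, g = f ≫ w.inv := ⟨_, rfl⟩
    have hg : f = g ≫ w.hom := by rw [hgdef, Category.assoc, Iso.inv_hom_id, Category.comp_id]
    -- decompose V along g using extensivity
    have vk := FinitaryExtensive.vanKampen (BinaryCofan.mk (coprod.inl : A ⟶ A ⨿ A) coprod.inr)
      (coprodIsCoprod A A)
    have key := (BinaryCofan.isVanKampen_iff _).mp vk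
      (BinaryCofan.mk (pullback.fst g coprod.inl) (pullback.fst g coprod.inr))
      (pullback.snd g coprod.inl) (pullback.snd g coprod.inr) g
      pullback.condition.symm pullback.condition.symm
    obtain ⟨hcolim⟩ := key.mpr
      ⟨IsPullback.of_hasPullback g coprod.inl, IsPullback.of_hasPullback g coprod.inr⟩
    have e := hcolim.coconePointUniqueUpToIso
      (coprodIsCoprod (pullback g (coprod.inl : A ⟶ A ⨿ A)) (pullback g (coprod.inr : A ⟶ A ⨿ A)))
    -- the factorization argument
    have factor : ∀ (k : PUnit.{u+1} ⟶ S) (h : V ⟶ Δ.obj PUnit.{u+1}),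
        f = h ≫ Δ.map k → False := by
      intro k h hfac
      set ψ : Pi0.obj V ⟶ (PUnit.{u + 1} : Type u) := (adj.homEquiv V _).symm h with hψdef
      have hh : h = adj.homEquiv V _ ψ := by simp [hψdef]
      have : χ = ψ ≫ k := by
        apply (adj.homEquiv V S).injective
        rw [Adjunction.homEquiv_naturality_right, ← hh, ← hfac, hfdef]
      have hx : χ x = k (ψ x) := ConcreteCategory.congr_hom this x
      have hy : χ y = k (ψ y) := ConcreteCategory.congr_hom this y
      have hχx : χ x = (coprod.inl : PUnit.{u+1} ⟶ S) PUnit.unit := by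
        simp [hχdef]
      have hχy : χ y = (coprod.inr : PUnit.{u+1} ⟶ S) PUnit.unit := by
        simp only [hχdef, TypeCat.ofHom_apply]
        rw [if_neg fun hEq => hxy hEq.symm]
      apply hne'
      rw [← hχx, ← hχy, hx, hy, Subsingleton.elim (ψ x) (ψ y)]
    -- case analysis on connectedness
    have hwinl : (coprod.inl : A ⟶ A ⨿ A) ≫ w.hom = Δ.map (coprod.inl : PUnit.{u+1} ⟶ S) :=
      coprodComparison_inl Δ
    have hwinr : (coprod.inr : A ⟶ A ⨿ A) ≫ w.hom = Δ.map (coprod.inr : PUnit.{u+1} ⟶ S) :=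
      coprodComparison_inr Δ
    have hL : pullback.fst g (coprod.inl : A ⟶ A ⨿ A) ≫ f =
        pullback.snd g coprod.inl ≫ Δ.map (coprod.inl : PUnit.{u+1} ⟶ S) := by
      rw [hg, ← Category.assoc, pullback.condition, Category.assoc, hwinl]
    have hR : pullback.fst g (coprod.inr : A ⟶ A ⨿ A) ≫ f =
        pullback.snd g coprod.inr ≫ Δ.map (coprod.inr : PUnit.{u+1} ⟶ S) := by
      rw [hg, ← Category.assoc, pullback.condition, Category.assoc, hwinr]
    rcases hV _ _ e with ⟨hA', hnB⟩ | ⟨hB', hnA⟩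
    · obtain ⟨hr⟩ := not_not.mp hnB
      -- the right part is initial; f factors through coprod.inl
      set r : V ⟶ pullback g (coprod.inl : A ⟶ A ⨿ A) :=
        hcolim.desc (BinaryCofan.mk (𝟙 _) (hr.to _)) with hrdef
      have h1 : pullback.fst g (coprod.inl : A ⟶ A ⨿ A) ≫ r = 𝟙 _ :=
        hcolim.fac _ ⟨WalkingPair.left⟩
      refine factor (coprod.inl : PUnit.{u+1} ⟶ S) (r ≫ pullback.snd g coprod.inl) ?_
      apply hcolim.hom_ext
      rintro ⟨⟨⟩⟩
      · simp only [BinaryCofan.mk_pt, pair_obj_left, BinaryCofan.ι_app_left, BinaryCofan.mk_inl]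
        show pullback.fst g (coprod.inl : A ⟶ A ⨿ A) ≫ f = pullback.fst g coprod.inl ≫
          (r ≫ pullback.snd g coprod.inl) ≫ Δ.map (coprod.inl : PUnit.{u+1} ⟶ S)
        rw [hL, ← Category.assoc, ← Category.assoc, h1, Category.id_comp]
      · simp only [BinaryCofan.mk_pt, pair_obj_right, BinaryCofan.ι_app_right, BinaryCofan.mk_inr]
        exact hr.hom_ext _ _
    · obtain ⟨hl⟩ := not_not.mp hnA
      -- the left part is initial; f factors through coprod.inr
      set r : V ⟶ pullback g (coprod.inr : A ⟶ A ⨿ A) :=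
        hcolim.desc (BinaryCofan.mk (hl.to _) (𝟙 _)) with hrdef
      have h1 : pullback.fst g (coprod.inr : A ⟶ A ⨿ A) ≫ r = 𝟙 _ :=
        hcolim.fac _ ⟨WalkingPair.right⟩
      refine factor (coprod.inr : PUnit.{u+1} ⟶ S) (r ≫ pullback.snd g coprod.inr) ?_
      apply hcolim.hom_ext
      rintro ⟨⟨⟩⟩
      · simp only [BinaryCofan.mk_pt, pair_obj_left, BinaryCofan.ι_app_left, BinaryCofan.mk_inl]
        exact hl.hom_ext _ _
      · simp only [BinaryCofan.mk_pt, pair_obj_right, BinaryCofan.ι_app_right, BinaryCofan.mk_inr]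
        show pullback.fst g (coprod.inr : A ⟶ A ⨿ A) ≫ f = pullback.fst g coprod.inr ≫
          (r ≫ pullback.snd g coprod.inr) ≫ Δ.map (coprod.inr : PUnit.{u+1} ⟶ S)
        rw [hR, ← Category.assoc, ← Category.assoc, h1, Category.id_comp]
  obtain ⟨x0⟩ := hne
  exact ⟨⟨fun _ => PUnit.unit, fun _ => x0, fun a => hsub x0 a, fun _ => rfl⟩⟩

end Aux

/-- In a locally connected Grothendieck topos `Sh(C,J)` (i.e. the constant sheaf
functor `Δ : Type → Sh(C,J)` has a left adjoint `Π₀`), if an object `E` is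
isomorphic to a coproduct `∐ᵢ Uᵢ` of connected objects, then `Π₀(E)` is in
bijection with the index set `I`. -/
theorem pi0_of_coproduct_of_connected
    {C : Type u} [SmallCategory C] (J : GrothendieckTopology C)
    (Pi0 : Sheaf J (Type u) ⥤ Type u) (adj : Pi0 ⊣ constantSheaf J (Type u))
    (E : Sheaf J (Type u)) {I : Type u} (U : I → Sheaf J (Type u))
    (hU : ∀ i, IsConnectedObject (U i)) (e : E ≅ ∐ U) :
    Nonempty (Pi0.obj E ≃ I) := by
  classical
  haveI h1 : PreservesColimitsOfSize.{u, u} Pi0 := adj.leftAdjoint_preservesColimits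
  have e1 : Pi0.obj E ≃ Pi0.obj (∐ U) := (Pi0.mapIso e).toEquiv
  have e2 : Pi0.obj (∐ U) ≃ (∐ fun i => Pi0.obj (U i) : Type u) :=
    (PreservesCoproduct.iso Pi0 U).toEquiv
  have e3 : (∐ fun i => Pi0.obj (U i) : Type u) ≃ Σ i, Pi0.obj (U i) :=
    (Types.coproductIso _).toEquiv
  have e4 : ∀ i, Pi0.obj (U i) ≃ PUnit.{u + 1} :=
    fun i => Classical.choice (pi0_connected_unique J adj (hU i))
  exact ⟨e1.trans <| e2.trans <| e3.trans <|
    (Equiv.sigmaCongrRight e4).trans (Equiv.sigmaPUnit I)⟩
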